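/- Let q > 0 and consider the equation 1 + 2(1-q)z + √(1-4z) = 0 for complex z with |z| ≤ 1/4, where √ denotes the principal branch of the square root. This equation has a solution z with |z| ≤ 1/4 if and only if q ≥ 3, and in that case the solution is z = (q-2)/(q-1)². -/

import Mathlib

lemma aux_sqrt_sq (t : ℝ) (ht : 0 ≤ t) : ((t : ℂ) ^ 2) ^ ((1 : ℂ) / 2) = (t : ℂ) := by
  have h1 : ((t : ℂ)) ^ 2 = (((t ^ 2 : ℝ)) : ℂ) := by push_cast; ring
  have h2 : ((1 : ℂ) / 2) = (((1 / 2 : ℝ)) : ℂ) := by norm_num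
  rw [h1, h2, ← Complex.ofReal_cpow (by positivity), ← Real.rpow_natCast t 2,
    ← Real.rpow_mul ht]
  norm_num

lemma aux_sqrt_sq' (t : ℝ) : ((t : ℂ) ^ 2) ^ ((1 : ℂ) / 2) = ((|t| : ℝ) : ℂ) := by
  have h : ((t : ℂ)) ^ 2 = ((|t| : ℝ) : ℂ) ^ 2 := by
    rw [← Complex.ofReal_pow, ← Complex.ofReal_pow, sq_abs]
  rw [h, aux_sqrt_sq _ (abs_nonneg t)]

/-- For `q > 0`, the equation `1 + 2(1-q)z + √(1-4z) = 0` (with the principal branch of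
the complex square root, realized as `w ^ (1/2 : ℂ)`) has a solution `z` with
`|z| ≤ 1/4` if and only if `q ≥ 3`, in which case the solution is
`z = (q-2)/(q-1)²`. -/
theorem dominant_pole_characterization (q : ℝ) (hq : 0 < q) :
    ∀ z : ℂ,
      (‖z‖ ≤ 1 / 4 ∧
          1 + 2 * (1 - (q : ℂ)) * z + (1 - 4 * z) ^ ((1 : ℂ) / 2) = 0) ↔
        (3 ≤ q ∧ z = ((q : ℂ) - 2) / ((q : ℂ) - 1) ^ 2) := by
  intro z
  constructor
  · rintro ⟨habs, h⟩
    have hw : (1 - 4 * z) ^ ((1 : ℂ) / 2) = 2 * ((q : ℂ) - 1) * z - 1 := by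
      linear_combination h
    have hsq : ((1 - 4 * z) ^ ((1 : ℂ) / 2)) ^ 2 = 1 - 4 * z := by
      have := Complex.cpow_ofNat_inv_pow (1 - 4 * z) 2
      simpa [one_div] using this
    rw [hw] at hsq
    have hz : z * (((q : ℂ) - 1) ^ 2 * z - ((q : ℂ) - 2)) = 0 := by
      linear_combination (1/4 : ℂ) * hsq
    rcases mul_eq_zero.mp hz with hz0 | hz1
    · rw [hz0] at h
      simp [Complex.one_cpow] at h
    · have hz2 : ((q : ℂ) - 1) ^ 2 * z = (q : ℂ) - 2 := by linear_combination hz1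
      by_cases hq1 : q = 1
      · rw [hq1] at hz2; norm_num at hz2
      have hne : ((q : ℂ) - 1) ≠ 0 := by
        intro hc
        apply hq1
        have h1 : ((q : ℝ) : ℂ) = ((1 : ℝ) : ℂ) := by
          rw [sub_eq_zero] at hc; exact_mod_cast hc
        exact_mod_cast h1
      have hzval : z = ((q : ℂ) - 2) / ((q : ℂ) - 1) ^ 2 := by
        field_simp at hz2 ⊢
        linear_combination hz2
      set t : ℝ := (q - 3) / (q - 1) with ht
      have hts : (t : ℂ) * ((q : ℂ) - 1) = (q : ℂ) - 3 := by
        rw [ht]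
        push_cast
        field_simp
      have hone4z : 1 - 4 * z = ((t : ℂ)) ^ 2 := by
        rw [hzval]
        rw [show ((t : ℂ)) = (((q:ℂ)-3)/((q:ℂ)-1)) from by rw [eq_div_iff hne]; exact hts]
        field_simp
        ring
      rw [hone4z, aux_sqrt_sq' t] at h
      -- multiply the equation by (q-1)^2 using hz2
      have h' : ((q:ℂ)-1)^2 + 2*(1-(q:ℂ))*((q:ℂ)-2) + ((|t| : ℝ) : ℂ) * ((q:ℂ)-1)^2 = 0 := by
        linear_combination ((q:ℂ)-1)^2 * h + (-2*(1-(q:ℂ))) * hz2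
      have hcan : ((|t| : ℝ) : ℂ) * ((q:ℂ)-1)^2 = (t : ℂ) * ((q:ℂ)-1)^2 := by
        linear_combination h' - ((q:ℂ)-1) * hts
      have habseq : ((|t| : ℝ) : ℂ) = ((t : ℝ) : ℂ) :=
        mul_right_cancel₀ (pow_ne_zero 2 hne) hcan
      have htnn : 0 ≤ t := by
        have h1 : |t| = t := by exact_mod_cast habseq
        rw [← h1]; exact abs_nonneg t
      have hrz : ‖z‖ = |(q - 2) / (q - 1) ^ 2| := by
        rw [hzval]
        rw [show ((q : ℂ) - 2) / ((q : ℂ) - 1) ^ 2 = (((q - 2) / (q - 1) ^ 2 : ℝ) : ℂ) by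
          push_cast; ring]
        rw [Complex.norm_real, Real.norm_eq_abs]
      rw [hrz] at habs
      have hq1' : q - 1 ≠ 0 := sub_ne_zero.mpr hq1
      have key : 3 ≤ q := by
        rcases lt_or_gt_of_ne hq1 with hlt | hgt
        · exfalso
          rw [abs_div, abs_pow] at habs
          have h2 : |q - 2| = 2 - q := by rw [abs_of_nonpos (by linarith)]; ring
          have h3 : |q - 1| ^ 2 = (q - 1) ^ 2 := by rw [sq_abs]
          rw [h2, h3] at habs
          have hpos : (0 : ℝ) < (q - 1) ^ 2 := by positivity
          rw [div_le_div_iff₀ hpos (by norm_num)] at habs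
          nlinarith
        · have h4 : 0 ≤ t * (q - 1) := mul_nonneg htnn (by linarith)
          rw [ht, div_mul_cancel₀ _ hq1'] at h4
          linarith
      exact ⟨key, hzval⟩
  · rintro ⟨hq3, hzval⟩
    have hq1' : q - 1 ≠ 0 := by intro h; linarith [sub_eq_zero.mp h]
    have hne : ((q : ℂ) - 1) ≠ 0 := by
      intro hc
      apply hq1'
      have h1 : ((q : ℝ) : ℂ) = ((1 : ℝ) : ℂ) := by rw [sub_eq_zero] at hc; exact_mod_cast hc
      have := Complex.ofReal_injective h1
      linarith
    constructor
    · rw [hzval]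
      rw [show ((q : ℂ) - 2) / ((q : ℂ) - 1) ^ 2 = (((q - 2) / (q - 1) ^ 2 : ℝ) : ℂ) by
        push_cast; ring]
      rw [Complex.norm_real, Real.norm_eq_abs,
        abs_of_nonneg (div_nonneg (by linarith) (by positivity))]
      rw [div_le_div_iff₀ (by positivity) (by norm_num)]
      nlinarith [sq_nonneg (q - 3)]
    · set t : ℝ := (q - 3) / (q - 1) with ht
      have htnn : 0 ≤ t := by
        rw [ht]; exact div_nonneg (by linarith) (by linarith)
      have hts : (t : ℂ) * ((q : ℂ) - 1) = (q : ℂ) - 3 := by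
        rw [ht]
        push_cast
        field_simp
      have hone4z : 1 - 4 * z = ((t : ℂ)) ^ 2 := by
        rw [hzval]
        rw [show ((t : ℂ)) = (((q:ℂ)-3)/((q:ℂ)-1)) from by rw [eq_div_iff hne]; exact hts]
        field_simp
        ring
      rw [hone4z, aux_sqrt_sq t htnn, hzval]
      rw [show ((t : ℂ)) = (((q:ℂ)-3)/((q:ℂ)-1)) from by rw [eq_div_iff hne]; exact hts]
      field_simp
      ring
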